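/- Let Θ: [1,∞) → (0,∞) be non-decreasing and locally Lipschitz, and let Θ' denote its almost-everywhere defined derivative. If ∫_1^∞ Θ'(s)/(s Θ(s)) ds = +∞, then Θ does not have polynomial growth: for every m ∈ ℕ one has limsup_{s→∞} Θ(s)/s^m = +∞. -/

import Mathlib

open MeasureTheory

theorem stmt_6 (Θ Θ' : ℝ → ℝ)
    (hΘ_pos : ∀ s : ℝ, 1 ≤ s → 0 < Θ s)
    (hΘ_mono : MonotoneOn Θ (Set.Ici 1))
    (hΘ_lip : ∀ s ∈ Set.Ici (1:ℝ), ∃ K : NNReal, ∃ t ∈ nhdsWithin s (Set.Ici 1),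
      LipschitzOnWith K Θ t)
    (hΘ_deriv : ∀ᵐ s ∂(volume.restrict (Set.Ici (1:ℝ))),
      HasDerivWithinAt Θ (Θ' s) (Set.Ici 1) s)
    (hdiv : ∫⁻ s in Set.Ioi (1:ℝ), ENNReal.ofReal (Θ' s / (s * Θ s)) = ⊤) :
    ∀ m : ℕ, ∀ M : ℝ, ∃ᶠ s in Filter.atTop, M < Θ s / s ^ m := by
  intro m M
  by_contra hcon
  rw [Filter.not_frequently] at hcon
  obtain ⟨s₀, hs₀⟩ := Filter.eventually_atTop.1 hcon
  set s₁ : ℝ := max s₀ 1 with hs₁def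
  have hs₁1 : (1:ℝ) ≤ s₁ := le_max_right _ _
  have hbd : ∀ s : ℝ, s₁ ≤ s → Θ s ≤ M * s ^ m := by
    intro s hs
    have h1 : (1:ℝ) ≤ s := hs₁1.trans hs
    have := hs₀ s ((le_max_left _ _).trans hs)
    push_neg at this
    have hsm : (0:ℝ) < s ^ m := pow_pos (lt_of_lt_of_le one_pos h1) m
    calc Θ s = (Θ s / s ^ m) * s ^ m := by field_simp
      _ ≤ M * s ^ m := mul_le_mul_of_nonneg_right this hsm.le
  have hM : 0 < M := by
    have h := hbd s₁ le_rfl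
    have := hΘ_pos s₁ hs₁1
    nlinarith [pow_pos (lt_of_lt_of_le one_pos hs₁1) m]
  -- continuity of Θ on Ici 1
  have hcont : ∀ s ∈ Set.Ici (1:ℝ), ContinuousWithinAt Θ (Set.Ici 1) s := by
    intro s hs
    obtain ⟨K, t, ht, hlip⟩ := hΘ_lip s hs
    have hst : s ∈ t := mem_of_mem_nhdsWithin hs ht
    exact (hlip.continuousOn s hst).mono_of_mem_nhdsWithin ht
  -- the Stieltjes function g = log ∘ Θ ∘ (max · 1)
  have gmono : Monotone (fun x : ℝ => Real.log (Θ (max x 1))) := by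
    intro x y hxy
    exact Real.log_le_log (hΘ_pos _ (le_max_right _ _))
      (hΘ_mono (le_max_right x 1) (le_max_right y 1) (max_le_max hxy le_rfl))
  have gcont : Continuous (fun x : ℝ => Real.log (Θ (max x 1))) := by
    rw [continuous_iff_continuousAt]
    intro x
    have h1 : Filter.Tendsto (fun y : ℝ => max y 1) (nhds x) (nhdsWithin (max x 1) (Set.Ici 1)) :=
      tendsto_nhdsWithin_of_tendsto_nhds_of_eventually_within _
        ((continuous_id.max continuous_const).tendsto x)
        (Filter.Eventually.of_forall fun y => le_max_right y 1)
    have h2 : Filter.Tendsto (fun y : ℝ => Θ (max y 1)) (nhds x) (nhds (Θ (max x 1))) :=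
      ((hcont _ (le_max_right x 1)).tendsto).comp h1
    exact ((Real.continuousAt_log (ne_of_gt (hΘ_pos _ (le_max_right x 1)))).tendsto).comp h2
  set g : StieltjesFunction ℝ :=
    { toFun := fun x : ℝ => Real.log (Θ (max x 1))
      mono' := gmono
      right_continuous' := fun x => (gcont.continuousAt).continuousWithinAt } with hgdef
  -- a.e. identification of the derivative
  have hae : ∀ᵐ s ∂(volume.restrict (Set.Ioi (1:ℝ))),
      (g.measure.rnDeriv volume s).toReal = Θ' s / Θ s := by
    have h1 : ∀ᵐ s ∂(volume.restrict (Set.Ioi (1:ℝ))),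
        HasDerivWithinAt Θ (Θ' s) (Set.Ici 1) s :=
      ae_restrict_of_ae_restrict_of_subset Set.Ioi_subset_Ici_self hΘ_deriv
    have h2 : ∀ᵐ s ∂(volume.restrict (Set.Ioi (1:ℝ))),
        HasDerivAt g ((g.measure.rnDeriv volume s).toReal) s :=
      ae_restrict_of_ae g.ae_hasDerivAt
    have h3 : ∀ᵐ s ∂(volume.restrict (Set.Ioi (1:ℝ))), s ∈ Set.Ioi (1:ℝ) :=
      ae_restrict_mem measurableSet_Ioi
    filter_upwards [h1, h2, h3] with s hds hgs hs
    have hΘs : HasDerivAt Θ (Θ' s) s := hds.hasDerivAt (Ici_mem_nhds hs)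
    have hlog : HasDerivAt (fun y => Real.log (Θ y)) (Θ' s / Θ s) s :=
      hΘs.log (ne_of_gt (hΘ_pos s (le_of_lt hs)))
    have heq : (fun x : ℝ => Real.log (Θ (max x 1))) =ᶠ[nhds s] fun y => Real.log (Θ y) := by
      filter_upwards [Ioi_mem_nhds hs] with y hy
      rw [max_eq_left (le_of_lt hy)]
    have hg2 : HasDerivAt g (Θ' s / Θ s) s := hlog.congr_of_eventuallyEq heq
    exact hgs.unique hg2
  -- key integral inequality on [a,b] ⊆ (1,∞)
  have key : ∀ a b : ℝ, 1 ≤ a → a ≤ b →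
      ∫⁻ s in Set.Ioc a b, ENNReal.ofReal (Θ' s / Θ s)
        ≤ ENNReal.ofReal (Real.log (Θ b) - Real.log (Θ a)) := by
    intro a b ha hab
    have hsub : Set.Ioc a b ⊆ Set.Ioi (1:ℝ) := fun x hx => lt_of_lt_of_le hx.1 (le_refl x) |>.trans_le' ha
    have hae' : ∀ᵐ s ∂(volume.restrict (Set.Ioc a b)),
        (g.measure.rnDeriv volume s).toReal = Θ' s / Θ s :=
      ae_restrict_of_ae_restrict_of_subset hsub hae
    calc ∫⁻ s in Set.Ioc a b, ENNReal.ofReal (Θ' s / Θ s)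
        = ∫⁻ s in Set.Ioc a b, ENNReal.ofReal ((g.measure.rnDeriv volume s).toReal) :=
          lintegral_congr_ae (hae'.mono fun s h => by dsimp only; rw [← h])
      _ ≤ ∫⁻ s in Set.Ioc a b, g.measure.rnDeriv volume s :=
          lintegral_mono fun s => ENNReal.ofReal_toReal_le
      _ ≤ g.measure (Set.Ioc a b) := Measure.setLIntegral_rnDeriv_le _
      _ = ENNReal.ofReal (g b - g a) := g.measure_Ioc a b
      _ = ENNReal.ofReal (Real.log (Θ b) - Real.log (Θ a)) := by
          have hb : max b 1 = b := max_eq_left (ha.trans hab)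
          have ha' : max a 1 = a := max_eq_left ha
          show ENNReal.ofReal (Real.log (Θ (max b 1)) - Real.log (Θ (max a 1))) = _
          rw [hb, ha']
  -- polynomial growth bound on log Θ
  have hlogbd : ∀ s : ℝ, 1 ≤ s →
      Real.log (Θ s) ≤ Real.log M + m * Real.log s₁ + m * Real.log s := by
    intro s hs
    have hspos : (0:ℝ) < s := lt_of_lt_of_le one_pos hs
    have hs₁pos : (0:ℝ) < s₁ := lt_of_lt_of_le one_pos hs₁1
    have hmax : max s s₁ ≤ s₁ * s := by
      rcases le_total s s₁ with h | h
      · rw [max_eq_right h]; nlinarith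
      · rw [max_eq_left h]; nlinarith
    have h1 : Θ s ≤ M * (s₁ * s) ^ m := by
      calc Θ s ≤ Θ (max s s₁) := hΘ_mono hs (le_trans hs (le_max_left _ _)) (le_max_left _ _)
        _ ≤ M * (max s s₁) ^ m := hbd _ (le_max_right _ _)
        _ ≤ M * (s₁ * s) ^ m := by
            apply mul_le_mul_of_nonneg_left _ hM.le
            exact pow_le_pow_left₀ (le_trans zero_le_one (le_trans hs (le_max_left _ _))) hmax m
    have h2 := Real.log_le_log (hΘ_pos s hs) h1
    rw [Real.log_mul (ne_of_gt hM) (by positivity), Real.log_pow,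
      Real.log_mul (ne_of_gt hs₁pos) (ne_of_gt hspos)] at h2
    linarith [h2]
  set A : ℝ := Real.log M + m * Real.log s₁ - Real.log (Θ 1) with hAdef
  set B : ℝ := m * Real.log 2 with hBdef
  have hA : 0 ≤ A := by
    have := hlogbd 1 le_rfl
    simp only [Real.log_one, mul_zero, add_zero] at this
    simp only [hAdef]; linarith
  have hB : 0 ≤ B := by
    have := Real.log_nonneg (by norm_num : (1:ℝ) ≤ 2)
    positivity
  -- per-piece bound
  have piece : ∀ k : ℕ,
      ∫⁻ s in Set.Ioc ((2:ℝ)^k) ((2:ℝ)^(k+1)), ENNReal.ofReal (Θ' s / (s * Θ s))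
        ≤ ENNReal.ofReal ((1/2:ℝ)^k * (A + B * ((k:ℝ)+1))) := by
    intro k
    have h2k : (1:ℝ) ≤ 2^k := one_le_pow₀ (by norm_num : (1:ℝ) ≤ 2)
    have h2kpos : (0:ℝ) < 2^k := lt_of_lt_of_le one_pos h2k
    have hpt : ∀ᵐ s ∂(volume.restrict (Set.Ioc ((2:ℝ)^k) ((2:ℝ)^(k+1)))),
        ENNReal.ofReal (Θ' s / (s * Θ s))
          ≤ ENNReal.ofReal ((1/2:ℝ)^k) * ENNReal.ofReal (Θ' s / Θ s) := by
      filter_upwards [ae_restrict_mem measurableSet_Ioc] with s hs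
      have hs1 : (1:ℝ) ≤ s := le_trans h2k hs.1.le
      have hspos : (0:ℝ) < s := lt_of_lt_of_le one_pos hs1
      have hΘpos := hΘ_pos s hs1
      rcases le_or_gt 0 (Θ' s) with h | h
      · have heq : Θ' s / (s * Θ s) = (1/s) * (Θ' s / Θ s) := by
          field_simp
        have hle : Θ' s / (s * Θ s) ≤ (1/2:ℝ)^k * (Θ' s / Θ s) := by
          rw [heq, one_div_pow]
          apply mul_le_mul_of_nonneg_right _ (div_nonneg h hΘpos.le)
          exact one_div_le_one_div_of_le h2kpos hs.1.le
        calc ENNReal.ofReal (Θ' s / (s * Θ s)) ≤ ENNReal.ofReal ((1/2:ℝ)^k * (Θ' s / Θ s)) :=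
              ENNReal.ofReal_le_ofReal hle
          _ = ENNReal.ofReal ((1/2:ℝ)^k) * ENNReal.ofReal (Θ' s / Θ s) :=
              ENNReal.ofReal_mul (by positivity)
      · rw [ENNReal.ofReal_of_nonpos (div_nonpos_of_nonpos_of_nonneg h.le (by positivity))]
        exact zero_le
    have hlogk : Real.log (Θ ((2:ℝ)^(k+1))) - Real.log (Θ ((2:ℝ)^k)) ≤ A + B * ((k:ℝ)+1) := by
      have h1 : Real.log (Θ ((2:ℝ)^(k+1)))
          ≤ Real.log M + m * Real.log s₁ + m * (((k:ℝ)+1) * Real.log 2) := by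
        have := hlogbd ((2:ℝ)^(k+1)) (one_le_pow₀ (by norm_num : (1:ℝ) ≤ 2))
        rwa [Real.log_pow, Nat.cast_add, Nat.cast_one] at this
      have h2 : Real.log (Θ 1) ≤ Real.log (Θ ((2:ℝ)^k)) :=
        Real.log_le_log (hΘ_pos 1 le_rfl) (hΘ_mono (Set.mem_Ici.2 le_rfl) h2k h2k)
      simp only [hAdef, hBdef]
      have hmlog : (m:ℝ) * (((k:ℝ)+1) * Real.log 2) = m * Real.log 2 * ((k:ℝ)+1) := by ring
      linarith [h1, h2]
    calc ∫⁻ s in Set.Ioc ((2:ℝ)^k) ((2:ℝ)^(k+1)), ENNReal.ofReal (Θ' s / (s * Θ s))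
        ≤ ∫⁻ s in Set.Ioc ((2:ℝ)^k) ((2:ℝ)^(k+1)),
            ENNReal.ofReal ((1/2:ℝ)^k) * ENNReal.ofReal (Θ' s / Θ s) := lintegral_mono_ae hpt
      _ = ENNReal.ofReal ((1/2:ℝ)^k)
            * ∫⁻ s in Set.Ioc ((2:ℝ)^k) ((2:ℝ)^(k+1)), ENNReal.ofReal (Θ' s / Θ s) :=
          lintegral_const_mul' _ _ ENNReal.ofReal_ne_top
      _ ≤ ENNReal.ofReal ((1/2:ℝ)^k)
            * ENNReal.ofReal (Real.log (Θ ((2:ℝ)^(k+1))) - Real.log (Θ ((2:ℝ)^k))) :=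
          mul_le_mul_right (key _ _ h2k (pow_le_pow_right₀ (by norm_num : (1:ℝ) ≤ 2) (Nat.le_succ k))) _
      _ ≤ ENNReal.ofReal ((1/2:ℝ)^k * (A + B * ((k:ℝ)+1))) := by
          rw [← ENNReal.ofReal_mul (by positivity)]
          exact ENNReal.ofReal_le_ofReal (mul_le_mul_of_nonneg_left hlogk (by positivity))
  -- cover (1, ∞) by dyadic intervals
  have hcover : Set.Ioi (1:ℝ) ⊆ ⋃ k : ℕ, Set.Ioc ((2:ℝ)^k) ((2:ℝ)^(k+1)) := by
    intro x hx
    have hx1 : (1:ℝ) < x := hx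
    have hP : ∃ n : ℕ, x ≤ (2:ℝ)^n := (pow_unbounded_of_one_lt x (by norm_num : (1:ℝ) < 2)).imp
      (fun n hn => hn.le)
    set n₀ := Nat.find hP with hn₀def
    have hspec : x ≤ (2:ℝ)^n₀ := Nat.find_spec hP
    have hn₀ : n₀ ≠ 0 := by
      intro h
      rw [h] at hspec
      simp at hspec
      linarith
    obtain ⟨k, hk⟩ := Nat.exists_eq_succ_of_ne_zero hn₀
    have hlow : ¬ x ≤ (2:ℝ)^k := Nat.find_min hP (by omega)
    refine Set.mem_iUnion.2 ⟨k, ?_⟩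
    constructor
    · exact lt_of_not_ge hlow
    · rw [hk] at hspec; exact hspec
  -- summability
  have hsum : Summable (fun k : ℕ => (1/2:ℝ)^k * (A + B * ((k:ℝ)+1))) := by
    have h1 : Summable (fun k : ℕ => (A + B) * (1/2:ℝ)^k) :=
      (summable_geometric_of_lt_one (by norm_num) (by norm_num)).mul_left _
    have h2 : Summable (fun k : ℕ => B * ((k:ℝ)^1 * (1/2:ℝ)^k)) :=
      (summable_pow_mul_geometric_of_norm_lt_one 1
        (by rw [Real.norm_eq_abs, abs_of_pos (by norm_num : (0:ℝ) < 1/2)]; norm_num : ‖(1/2:ℝ)‖ < 1)).mul_left B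
    exact (h1.add h2).congr (fun k => by push_cast; ring)
  have hnonneg : ∀ k : ℕ, (0:ℝ) ≤ (1/2:ℝ)^k * (A + B * ((k:ℝ)+1)) := by
    intro k
    have h : (0:ℝ) ≤ A + B * ((k:ℝ)+1) := add_nonneg hA (mul_nonneg hB (by positivity))
    exact mul_nonneg (by positivity) h
  -- conclude
  have hfin : ∫⁻ s in Set.Ioi (1:ℝ), ENNReal.ofReal (Θ' s / (s * Θ s)) ≠ ⊤ := by
    have h1 : ∫⁻ s in Set.Ioi (1:ℝ), ENNReal.ofReal (Θ' s / (s * Θ s))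
        ≤ ∑' k : ℕ, ∫⁻ s in Set.Ioc ((2:ℝ)^k) ((2:ℝ)^(k+1)),
            ENNReal.ofReal (Θ' s / (s * Θ s)) :=
      le_trans (lintegral_mono_set hcover) (lintegral_iUnion_le _ _)
    have h2 : (∑' k : ℕ, ∫⁻ s in Set.Ioc ((2:ℝ)^k) ((2:ℝ)^(k+1)),
          ENNReal.ofReal (Θ' s / (s * Θ s)))
        ≤ ∑' k : ℕ, ENNReal.ofReal ((1/2:ℝ)^k * (A + B * ((k:ℝ)+1))) :=
      ENNReal.tsum_le_tsum piece
    have h3 : (∑' k : ℕ, ENNReal.ofReal ((1/2:ℝ)^k * (A + B * ((k:ℝ)+1))))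
        = ENNReal.ofReal (∑' k : ℕ, (1/2:ℝ)^k * (A + B * ((k:ℝ)+1))) :=
      (ENNReal.ofReal_tsum_of_nonneg hnonneg hsum).symm
    exact ne_top_of_le_ne_top (by rw [h3]; exact ENNReal.ofReal_ne_top) (h1.trans h2)
  exact hfin hdiv
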